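/- Let k ≥ 1, β ∈ (0,1), ε > 0. Suppose each of k users independently reports, via ε-randomized response on {0,1,2,3} (truth with probability e^ε/(e^ε+3), otherwise uniform among the other three), a value y_i; let H(a) = |{i : y_i = a}| be the true histogram and C(a) the observed histogram of reports. Define the debiased estimate Ĥ(a) = ((e^ε+3)/(e^ε−1))·(C(a) − k/(e^ε+3)). Then with probability at least 1 − β, for all a ∈ {0,1,2,3}, |Ĥ(a) − H(a)| ≤ ((ε+4)/(ε√2))·sqrt(k·ln(8/β)). -/

import Mathlib

open MeasureTheory ProbabilityTheory
open scoped BigOperators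


/-- Hoeffding's lemma core: `1 - p + p * exp s ≤ exp (p*s + s^2/8)` for `p ∈ [0,1]`. -/
lemma bern_mgf_log (p : ℝ) (hp0 : 0 ≤ p) (hp1 : p ≤ 1) (s : ℝ) :
    1 - p + p * Real.exp s ≤ Real.exp (p * s + s ^ 2 / 8) := by
  rcases eq_or_lt_of_le hp1 with h1 | hp1
  · subst h1; simpa using Real.exp_le_exp.2 (by nlinarith [sq_nonneg s] : s ≤ 1 * s + s ^ 2 / 8)
  rcases eq_or_lt_of_le hp0 with h0 | hp0
  · subst h0
    simpa using Real.one_le_exp (by positivity : (0:ℝ) ≤ s ^ 2 / 8)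
  -- now 0 < p < 1
  set g : ℝ → ℝ := fun s => 1 - p + p * Real.exp s with hg
  have hgpos : ∀ x, 0 < g x := fun x => by
    have := Real.exp_pos x; simp only [hg]; nlinarith
  set f : ℝ → ℝ := fun s => p * s + s ^ 2 / 8 - Real.log (g s) with hf
  set f' : ℝ → ℝ := fun s => p + s / 4 - p * Real.exp s / g s with hf'
  have hderiv : ∀ x, HasDerivAt f (f' x) x := by
    intro x
    have hgd : HasDerivAt g (p * Real.exp x) x := by
      exact ((Real.hasDerivAt_exp x).const_mul p).const_add (1 - p)
    have hlog : HasDerivAt (fun y => Real.log (g y)) (p * Real.exp x / g x) x :=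
      hgd.log (hgpos x).ne'
    have h1 : HasDerivAt (fun y => p * y + y ^ 2 / 8) (p + 2 * x / 8) x := by
      have h2 : HasDerivAt (fun y : ℝ => p * y) p x := by
        simpa using (hasDerivAt_id x).const_mul p
      exact (h2.add ((hasDerivAt_pow 2 x).div_const 8)).congr_deriv (by norm_num)
    have := h1.sub hlog
    exact this.congr_deriv (by simp only [hf']; ring)
  have hderiv2 : ∀ x, HasDerivAt f' (1 / 4 - (p * Real.exp x * (1 - p)) / (g x) ^ 2) x := by
    intro x
    have hgd : HasDerivAt g (p * Real.exp x) x := by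
      exact ((Real.hasDerivAt_exp x).const_mul p).const_add (1 - p)
    have hnum : HasDerivAt (fun y => p * Real.exp y) (p * Real.exp x) x :=
      (Real.hasDerivAt_exp x).const_mul p
    have hdivd : HasDerivAt (fun y => p * Real.exp y / g y)
        ((p * Real.exp x * g x - p * Real.exp x * (p * Real.exp x)) / (g x) ^ 2) x :=
      hnum.div hgd (hgpos x).ne'
    have h1 : HasDerivAt (fun y => p + y / 4) (1 / 4) x := by
      simpa using ((hasDerivAt_id x).div_const 4).const_add p
    have := h1.sub hdivd
    have h3 : g x = 1 - p + p * Real.exp x := by simp [hg]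
    exact this.congr_deriv (by rw [h3]; ring)
  have hd2nonneg : ∀ x, 0 ≤ 1 / 4 - (p * Real.exp x * (1 - p)) / (g x) ^ 2 := by
    intro x
    have hg2 : (0:ℝ) < (g x) ^ 2 := pow_pos (hgpos x) 2
    rw [sub_nonneg, div_le_iff₀ hg2]
    have h3 : g x = 1 - p + p * Real.exp x := by simp [hg]
    nlinarith [sq_nonneg ((1 - p) - p * Real.exp x)]
  have hmono' : Monotone f' :=
    monotone_of_deriv_nonneg (fun x => (hderiv2 x).differentiableAt)
      (fun x => by rw [(hderiv2 x).deriv]; exact hd2nonneg x)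
  have hg0 : g 0 = 1 := by simp [hg]
  have hf'0 : f' 0 = 0 := by
    simp only [hf', Real.exp_zero, mul_one, hg0]
    ring
  have hf0 : f 0 = 0 := by
    simp only [hf, hg0, Real.log_one]
    ring
  have hfs : 0 ≤ f s := by
    rcases le_total 0 s with hs | hs
    · have hmf : MonotoneOn f (Set.Ici 0) := by
        apply monotoneOn_of_deriv_nonneg (convex_Ici 0)
        · exact fun x _ => (hderiv x).continuousAt.continuousWithinAt
        · exact fun x hx => (hderiv x).differentiableAt.differentiableWithinAt
        · intro x hx
          rw [(hderiv x).deriv, ← hf'0]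
          exact hmono' (le_of_lt (by simpa using hx))
      have := hmf (Set.self_mem_Ici) (Set.mem_Ici.2 hs) hs
      rwa [hf0] at this
    · have hmf : AntitoneOn f (Set.Iic 0) := by
        apply antitoneOn_of_deriv_nonpos (convex_Iic 0)
        · exact fun x _ => (hderiv x).continuousAt.continuousWithinAt
        · exact fun x hx => (hderiv x).differentiableAt.differentiableWithinAt
        · intro x hx
          rw [(hderiv x).deriv, ← hf'0]
          exact hmono' (le_of_lt (by simpa using hx))
      have := hmf (Set.mem_Iic.2 hs) (Set.self_mem_Iic) hs
      rwa [hf0] at this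
  have hlog : Real.log (g s) ≤ p * s + s ^ 2 / 8 := by
    simp only [hf] at hfs; linarith
  calc 1 - p + p * Real.exp s = g s := by simp [hg]
    _ = Real.exp (Real.log (g s)) := (Real.exp_log (hgpos s)).symm
    _ ≤ Real.exp (p * s + s ^ 2 / 8) := Real.exp_le_exp.2 hlog

section aux
variable {Ω : Type*} [MeasurableSpace Ω] (μ : Measure Ω) [IsProbabilityMeasure μ]

lemma indicator_exp_eq {A : Set Ω} (p t : ℝ) :
    (fun ω => Real.exp (t * (A.indicator (fun _ => (1:ℝ)) ω - p)))
      = fun ω => Real.exp (-(t*p)) + (Real.exp (t*(1-p)) - Real.exp (-(t*p)))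
          * A.indicator (fun _ => (1:ℝ)) ω := by
  funext ω
  by_cases h : ω ∈ A
  · simp only [Set.indicator_of_mem h]
    ring_nf
  · simp only [Set.indicator_of_notMem h]
    ring_nf

lemma indicator_integrable' {A : Set Ω} (hA : MeasurableSet A) (p t : ℝ) :
    Integrable (fun ω => Real.exp (t * (A.indicator (fun _ => (1:ℝ)) ω - p))) μ := by
  rw [indicator_exp_eq]
  exact (integrable_const _).add (((integrable_const (1:ℝ)).indicator hA).const_mul _)

lemma indicator_mgf_le' {A : Set Ω} (hA : MeasurableSet A) {p : ℝ}
    (hp : p = (μ A).toReal) (t : ℝ) :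
    mgf (fun ω => A.indicator (fun _ => (1:ℝ)) ω - p) μ t ≤ Real.exp (t ^ 2 / 8) := by
  have hp0 : 0 ≤ p := hp ▸ ENNReal.toReal_nonneg
  have hp1 : p ≤ 1 := by
    rw [hp, ← ENNReal.toReal_one]
    exact ENNReal.toReal_mono ENNReal.one_ne_top prob_le_one
  have hmgf : mgf (fun ω => A.indicator (fun _ => (1:ℝ)) ω - p) μ t
      = (1 - p) * Real.exp (-(t*p)) + p * Real.exp (t*(1-p)) := by
    rw [mgf, indicator_exp_eq]
    rw [integral_add (integrable_const _)
      (((integrable_const (1:ℝ)).indicator hA).const_mul _),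
      integral_const, integral_const_mul]
    simp only [show (fun _ : Ω => (1:ℝ)) = (1 : Ω → ℝ) from rfl, integral_indicator_one hA, ← hp]
    simp [measure_univ, Measure.real, ← hp]
    ring
  rw [hmgf]
  have h2 : (1 - p) * Real.exp (-(t*p)) + p * Real.exp (t*(1-p))
      = Real.exp (-(t*p)) * (1 - p + p * Real.exp t) := by
    rw [show t*(1-p) = -(t*p) + t by ring, Real.exp_add]
    ring
  rw [h2]
  calc Real.exp (-(t*p)) * (1 - p + p * Real.exp t)
      ≤ Real.exp (-(t*p)) * Real.exp (p * t + t ^ 2 / 8) :=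
        mul_le_mul_of_nonneg_left (bern_mgf_log p hp0 hp1 t) (Real.exp_pos _).le
    _ = Real.exp (t ^ 2 / 8) := by rw [← Real.exp_add]; ring_nf

end aux

lemma hoeff_tail {Ω : Type*} [MeasurableSpace Ω] (μ : Measure Ω) [IsProbabilityMeasure μ]
    {k : ℕ} (hk : 0 < k) (X : Fin k → Ω → ℝ)
    (hind : iIndepFun X μ)
    (hXm : ∀ i, Measurable (X i))
    (hint : ∀ i (s : ℝ), Integrable (fun ω => Real.exp (s * X i ω)) μ)
    (hmgf : ∀ i (s : ℝ), mgf (X i) μ s ≤ Real.exp (s ^ 2 / 8))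
    (t : ℝ) (ht : 0 ≤ t) :
    μ {ω | t ≤ ∑ i, X i ω} ≤ ENNReal.ofReal (Real.exp (-2 * t ^ 2 / k)) := by
  have hk' : (0:ℝ) < k := Nat.cast_pos.2 hk
  set s : ℝ := 4 * t / k with hs_def
  have hs : 0 ≤ s := by positivity
  have hintS : Integrable (fun ω => Real.exp (s * (∑ i, X i) ω)) μ :=
    hind.integrable_exp_mul_sum hXm (fun i _ => hint i s)
  have hch := measure_ge_le_exp_mul_mgf (μ := μ) (X := ∑ i, X i) t hs hintS
  have hmgfS : mgf (∑ i, X i) μ s ≤ Real.exp ((k:ℝ) * (s ^ 2 / 8)) := by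
    rw [hind.mgf_sum hXm]
    calc ∏ i, mgf (X i) μ s ≤ ∏ _i : Fin k, Real.exp (s ^ 2 / 8) :=
          Finset.prod_le_prod (fun i _ => mgf_nonneg) (fun i _ => hmgf i s)
      _ = Real.exp ((k:ℝ) * (s ^ 2 / 8)) := by
          rw [Finset.prod_const, Finset.card_univ, Fintype.card_fin, ← Real.exp_nat_mul]
  have hbound : (μ {ω | t ≤ (∑ i, X i) ω}).toReal ≤ Real.exp (-2 * t ^ 2 / k) := by
    calc (μ {ω | t ≤ (∑ i, X i) ω}).toReal
        ≤ Real.exp (-s * t) * mgf (∑ i, X i) μ s := hch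
      _ ≤ Real.exp (-s * t) * Real.exp ((k:ℝ) * (s ^ 2 / 8)) := by
          exact mul_le_mul_of_nonneg_left hmgfS (Real.exp_pos _).le
      _ = Real.exp (-s * t + (k:ℝ) * (s ^ 2 / 8)) := (Real.exp_add _ _).symm
      _ = Real.exp (-2 * t ^ 2 / k) := by
          congr 1
          rw [hs_def]
          field_simp
          ring
  have hset : {ω | t ≤ ∑ i, X i ω} = {ω | t ≤ (∑ i, X i) ω} := by
    simp only [Finset.sum_apply]
  rw [hset, ← ENNReal.ofReal_toReal (measure_ne_top μ _)]
  exact ENNReal.ofReal_le_ofReal hbound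

/-- Accuracy of the debiased randomized-response histogram: with probability at least
1 − β, for all a, |Ĥ(a) − H(a)| ≤ ((ε+4)/(ε√2))·√(k·ln(8/β)). -/
theorem rr_histogram_accuracy {Ω : Type*} [MeasurableSpace Ω] (μ : Measure Ω)
    [IsProbabilityMeasure μ] (k : ℕ) (hk : 1 ≤ k) (ε β : ℝ) (hε : 0 < ε)
    (hβ0 : 0 < β) (hβ1 : β < 1)
    (y : Fin k → Fin 4) (Y : Fin k → Ω → Fin 4) (hmeas : ∀ i, Measurable (Y i))
    (hindep : iIndepFun Y μ)
    (hlaw : ∀ i a, μ {ω | Y i ω = a} =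
      ENNReal.ofReal (if a = y i then Real.exp ε / (Real.exp ε + 3)
        else 1 / (Real.exp ε + 3))) :
    μ {ω | ∀ a : Fin 4,
        |((Real.exp ε + 3) / (Real.exp ε - 1)) *
            (((Finset.univ.filter (fun i => Y i ω = a)).card : ℝ)
              - k / (Real.exp ε + 3))
          - ((Finset.univ.filter (fun i => y i = a)).card : ℝ)|
          ≤ ((ε + 4) / (ε * Real.sqrt 2)) * Real.sqrt (k * Real.log (8 / β))}
      ≥ ENNReal.ofReal (1 - β) := by
  have hk0 : 0 < k := hk
  have hE1 : (1:ℝ) < Real.exp ε := by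
    have := Real.add_one_lt_exp hε.ne'
    linarith
  have hE1' : (0:ℝ) < Real.exp ε - 1 := by linarith
  have hE3 : (0:ℝ) < Real.exp ε + 3 := by linarith
  set E : ℝ := Real.exp ε with hE_def
  set P : ℝ := E / (E + 3) with hP_def
  set Q : ℝ := 1 / (E + 3) with hQ_def
  set R : ℝ := (E + 3) / (E - 1) with hR_def
  have hP0 : 0 ≤ P := by positivity
  have hQ0 : 0 ≤ Q := by positivity
  have hR0 : 0 < R := by positivity
  set L : ℝ := Real.log (8 / β) with hL_def
  have hL0 : 0 ≤ L := Real.log_nonneg (by rw [le_div_iff₀ hβ0]; linarith)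
  set t : ℝ := Real.sqrt ((k:ℝ) * L) / Real.sqrt 2 with ht_def
  have ht0 : 0 ≤ t := by positivity
  have ht2 : t ^ 2 = (k:ℝ) * L / 2 := by
    rw [ht_def, div_pow, Real.sq_sqrt (by positivity), Real.sq_sqrt (by norm_num)]
  set B : ℝ := ((ε + 4) / (ε * Real.sqrt 2)) * Real.sqrt ((k:ℝ) * L) with hB_def
  -- define p, A, X
  set p : Fin 4 → Fin k → ℝ := fun a i => if a = y i then P else Q with hp_def
  set A : Fin 4 → Fin k → Set Ω := fun a i => {ω | Y i ω = a} with hA_def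
  set X : Fin 4 → Fin k → Ω → ℝ :=
    fun a i ω => (A a i).indicator (fun _ => (1:ℝ)) ω - p a i with hX_def
  have hAmeas : ∀ a i, MeasurableSet (A a i) := fun a i => hmeas i (measurableSet_singleton a)
  have hp_eq : ∀ a i, p a i = (μ (A a i)).toReal := by
    intro a i
    rw [hA_def]
    simp only
    rw [hlaw i a, ENNReal.toReal_ofReal (by split <;> positivity)]
  have hXmeas : ∀ a i, Measurable (X a i) := by
    intro a i
    exact (measurable_const.indicator (hAmeas a i)).sub measurable_const
  have hXint : ∀ a i (s : ℝ), Integrable (fun ω => Real.exp (s * X a i ω)) μ := by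
    intro a i s
    exact indicator_integrable' μ (hAmeas a i) (p a i) s
  have hXmgf : ∀ a i (s : ℝ), mgf (X a i) μ s ≤ Real.exp (s ^ 2 / 8) := by
    intro a i s
    exact indicator_mgf_le' μ (hAmeas a i) (hp_eq a i) s
  have hXind : ∀ a, iIndepFun (X a) μ := by
    intro a
    have := hindep.comp (fun i => fun v : Fin 4 => (if v = a then (1:ℝ) else 0) - p a i)
      (fun i => Measurable.of_discrete)
    convert this using 1
    funext i
    funext ω
    simp only [Function.comp_apply, hX_def, hA_def, Set.indicator_apply, Set.mem_setOf_eq]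
  -- tail bounds
  have htail : ∀ a, μ {ω | t < |∑ i, X a i ω|} ≤ ENNReal.ofReal (β / 4) := by
    intro a
    have hup := hoeff_tail μ hk0 (X a) (hXind a) (hXmeas a) (hXint a) (hXmgf a) t ht0
    have hXind' : iIndepFun (fun i => -(X a i)) μ :=
      (hXind a).comp (fun _ => fun x : ℝ => -x) (fun _ => measurable_neg)
    have hdown := hoeff_tail μ hk0 (fun i => -(X a i)) hXind'
      (fun i => (hXmeas a i).neg)
      (fun i s => by simpa [neg_mul, mul_neg] using hXint a i (-s))
      (fun i s => by
        have : mgf (-(X a i)) μ s = mgf (X a i) μ (-s) := mgf_neg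
        rw [this]
        simpa [neg_sq] using hXmgf a i (-s))
      t ht0
    have hsub : {ω | t < |∑ i, X a i ω|} ⊆
        {ω | t ≤ ∑ i, X a i ω} ∪ {ω | t ≤ ∑ i, (-(X a i)) ω} := by
      intro ω hω
      have hω' : t < |∑ i, X a i ω| := hω
      rcases le_abs.1 hω'.le with h | h
      · exact Or.inl h
      · right
        simp only [Pi.neg_apply, Set.mem_setOf_eq, Finset.sum_neg_distrib]
        linarith
    calc μ {ω | t < |∑ i, X a i ω|}
        ≤ μ ({ω | t ≤ ∑ i, X a i ω} ∪ {ω | t ≤ ∑ i, (-(X a i)) ω}) := measure_mono hsub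
      _ ≤ μ {ω | t ≤ ∑ i, X a i ω} + μ {ω | t ≤ ∑ i, (-(X a i)) ω} := measure_union_le _ _
      _ ≤ ENNReal.ofReal (Real.exp (-2 * t ^ 2 / k)) +
            ENNReal.ofReal (Real.exp (-2 * t ^ 2 / k)) := add_le_add hup hdown
      _ = ENNReal.ofReal (2 * Real.exp (-2 * t ^ 2 / k)) := by
          rw [← ENNReal.ofReal_add (Real.exp_pos _).le (Real.exp_pos _).le]
          congr 1; ring
      _ = ENNReal.ofReal (β / 4) := by
          congr 1
          have hkne : (k:ℝ) ≠ 0 := Nat.cast_ne_zero.2 hk0.ne'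
          have harg : -2 * t ^ 2 / k = -L := by rw [ht2]; field_simp
          rw [harg, Real.exp_neg, hL_def, Real.exp_log (by positivity)]
          field_simp
          ring
  -- the good set T
  set T : Set Ω := ⋂ a : Fin 4, {ω | |∑ i, X a i ω| ≤ t} with hT_def
  have hTmeas : MeasurableSet T := by
    apply MeasurableSet.iInter
    intro a
    exact measurableSet_le
      ((Finset.measurable_sum _ (fun i _ => hXmeas a i)).abs) measurable_const
  have hTc : μ Tᶜ ≤ ENNReal.ofReal β := by
    have hTc_eq : Tᶜ = ⋃ a : Fin 4, {ω | t < |∑ i, X a i ω|} := by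
      rw [hT_def, Set.compl_iInter]
      refine Set.iUnion_congr fun a => ?_
      ext ω
      simp only [Set.mem_compl_iff, Set.mem_setOf_eq, not_le]
    rw [hTc_eq]
    calc μ (⋃ a : Fin 4, {ω | t < |∑ i, X a i ω|})
        ≤ ∑ a : Fin 4, μ {ω | t < |∑ i, X a i ω|} := measure_iUnion_fintype_le _ _
      _ ≤ ∑ _a : Fin 4, ENNReal.ofReal (β / 4) := Finset.sum_le_sum (fun a _ => htail a)
      _ = ENNReal.ofReal β := by
          rw [Finset.sum_const, Finset.card_univ, Fintype.card_fin, nsmul_eq_mul]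
          rw [show ((4:ℕ) : ENNReal) = ENNReal.ofReal (4:ℝ) by simp]
          rw [← ENNReal.ofReal_mul (by norm_num)]
          congr 1
          ring
  -- key algebraic identity
  have hRPQ : R * (P - Q) = 1 := by
    rw [hR_def, hP_def, hQ_def]
    field_simp
  have hkey : ∀ (a : Fin 4) (ω : Ω),
      R * (((Finset.univ.filter (fun i => Y i ω = a)).card : ℝ) - k / (E + 3))
        - ((Finset.univ.filter (fun i => y i = a)).card : ℝ)
      = R * (∑ i, X a i ω) := by
    intro a ω
    set H : ℝ := ((Finset.univ.filter (fun i => y i = a)).card : ℝ) with hH_def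
    have hC : ((Finset.univ.filter (fun i => Y i ω = a)).card : ℝ)
        = ∑ i, (A a i).indicator (fun _ => (1:ℝ)) ω := by
      rw [Finset.card_filter]
      push_cast
      refine Finset.sum_congr rfl fun i _ => ?_
      by_cases h : Y i ω = a
      · simp [h, hA_def, Set.indicator_apply, Set.mem_setOf_eq]
      · simp [h, hA_def, Set.indicator_apply, Set.mem_setOf_eq]
    have hfilter_eq : (Finset.univ.filter (fun i => a = y i))
        = (Finset.univ.filter (fun i => y i = a)) := by
      apply Finset.filter_congr
      intro i _
      simp [eq_comm]
    have hcard_not : ((Finset.univ.filter (fun i => ¬ a = y i)).card : ℝ)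
        = (k : ℝ) - H := by
      have h4 := Finset.card_filter_add_card_filter_not
        (s := (Finset.univ : Finset (Fin k))) (p := fun i => a = y i)
      rw [Finset.card_univ, Fintype.card_fin, hfilter_eq] at h4
      rw [hH_def]
      push_cast [← h4]
      ring
    have hsum_p : ∑ i, p a i = H * P + ((k:ℝ) - H) * Q := by
      rw [hp_def]
      simp only
      rw [Finset.sum_ite, Finset.sum_const, Finset.sum_const, nsmul_eq_mul, nsmul_eq_mul,
        hfilter_eq, hcard_not, hH_def]
    have hXsum : ∑ i, X a i ω = ((Finset.univ.filter (fun i => Y i ω = a)).card : ℝ)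
        - ∑ i, p a i := by
      rw [hX_def]
      simp only
      rw [Finset.sum_sub_distrib, hC]
    rw [hXsum, hsum_p]
    have hQk : (k:ℝ) / (E + 3) = (k:ℝ) * Q := by rw [hQ_def]; ring
    linear_combination H * hRPQ - R * hQk
  -- R * t ≤ B
  have hRt : R * t ≤ B := by
    have hRle : R ≤ (ε + 4) / ε := by
      rw [hR_def, div_le_div_iff₀ hE1' hε]
      have h5 := Real.add_one_lt_exp hε.ne'
      rw [hE_def]
      nlinarith [h5]
    have hsqrt2 : (0:ℝ) < Real.sqrt 2 := by positivity
    calc R * t = R * Real.sqrt ((k:ℝ) * L) / Real.sqrt 2 := by rw [ht_def]; ring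
      _ ≤ ((ε + 4) / ε) * Real.sqrt ((k:ℝ) * L) / Real.sqrt 2 := by
          gcongr
      _ = B := by
          rw [hB_def]
          field_simp
  -- T is contained in the good event
  have hsubset : T ⊆ {ω | ∀ a : Fin 4,
      |R * (((Finset.univ.filter (fun i => Y i ω = a)).card : ℝ) - k / (E + 3))
        - ((Finset.univ.filter (fun i => y i = a)).card : ℝ)| ≤ B} := by
    intro ω hω a
    have hSa : |∑ i, X a i ω| ≤ t := Set.mem_iInter.1 hω a
    calc |R * (((Finset.univ.filter (fun i => Y i ω = a)).card : ℝ) - k / (E + 3))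
          - ((Finset.univ.filter (fun i => y i = a)).card : ℝ)|
        = R * |∑ i, X a i ω| := by rw [hkey a ω, abs_mul, abs_of_pos hR0]
      _ ≤ R * t := mul_le_mul_of_nonneg_left hSa hR0.le
      _ ≤ B := hRt
  -- conclude
  have hfinal : ENNReal.ofReal (1 - β) ≤ μ T := by
    have h1 : ENNReal.ofReal (1 - β) = 1 - ENNReal.ofReal β := by
      rw [ENNReal.ofReal_sub _ hβ0.le, ENNReal.ofReal_one]
    have h3 : (1:ENNReal) - μ Tᶜ = μ T := by
      rw [prob_compl_eq_one_sub hTmeas]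
      exact ENNReal.sub_sub_cancel ENNReal.one_ne_top prob_le_one
    rw [h1, ← h3]
    exact tsub_le_tsub_left hTc 1
  exact le_trans hfinal (measure_mono hsubset)
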